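/- In a geodesic metric space where every geodesic triangle with vertex set of three distinct points reduces (after removing common initial arcs at each vertex) to a triangle with thin comparison property, all geodesic triangles are thin: i.e., if a geodesic triangle consists of a simple-closed-curve core triangle together with three geodesic 'tails' at the vertices, and the core triangle is thin, then the full triangle is thin. -/
import Mathlib


open Set Metric
open scoped ENNReal

noncomputable section

abbrev E2 := EuclideanSpace ℝ (Fin 2)

/-- A geodesic segment parametrized by arclength on `[a,b]`. -/
def IsGeodesicSeg {X : Type*} [MetricSpace X] (γ : ℝ → X) (a b : ℝ) : Prop :=
  ∀ s ∈ Set.Icc a b, ∀ t ∈ Set.Icc a b, dist (γ s) (γ t) = |s - t|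

/-- A geodesic ray parametrized by arclength on `[0,∞)`. -/
def IsGeodesicRay {X : Type*} [MetricSpace X] (γ : ℝ → X) : Prop :=
  ∀ s ∈ Set.Ici (0:ℝ), ∀ t ∈ Set.Ici (0:ℝ), dist (γ s) (γ t) = |s - t|

/-- A geodesic triangle: three arclength geodesic sides joining vertices `p q r`. -/
structure GeodesicTriangle (X : Type*) [MetricSpace X] where
  p : X
  q : X
  r : X
  side₁ : ℝ → X
  side₂ : ℝ → X
  side₃ : ℝ → X
  geo₁ : IsGeodesicSeg side₁ 0 (dist p q)
  geo₂ : IsGeodesicSeg side₂ 0 (dist q r)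
  geo₃ : IsGeodesicSeg side₃ 0 (dist r p)
  s₁0 : side₁ 0 = p
  s₁1 : side₁ (dist p q) = q
  s₂0 : side₂ 0 = q
  s₂1 : side₂ (dist q r) = r
  s₃0 : side₃ 0 = r
  s₃1 : side₃ (dist r p) = p

/-- Thinness: distances between points on the sides are bounded by distances
between the corresponding comparison points on a Euclidean comparison triangle. -/
def Thin {X : Type*} [MetricSpace X] (T : GeodesicTriangle X) : Prop :=
  ∀ p' q' r' : E2,
    dist p' q' = dist T.p T.q → dist q' r' = dist T.q T.r → dist r' p' = dist T.r T.p →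
    (∀ s ∈ Set.Icc (0:ℝ) (dist T.p T.q), ∀ t ∈ Set.Icc (0:ℝ) (dist T.q T.r),
      dist (T.side₁ s) (T.side₂ t) ≤
        dist (AffineMap.lineMap p' q' (s / dist T.p T.q))
             (AffineMap.lineMap q' r' (t / dist T.q T.r))) ∧
    (∀ s ∈ Set.Icc (0:ℝ) (dist T.q T.r), ∀ t ∈ Set.Icc (0:ℝ) (dist T.r T.p),
      dist (T.side₂ s) (T.side₃ t) ≤
        dist (AffineMap.lineMap q' r' (s / dist T.q T.r))
             (AffineMap.lineMap r' p' (t / dist T.r T.p))) ∧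
    (∀ s ∈ Set.Icc (0:ℝ) (dist T.r T.p), ∀ t ∈ Set.Icc (0:ℝ) (dist T.p T.q),
      dist (T.side₃ s) (T.side₁ t) ≤
        dist (AffineMap.lineMap r' p' (s / dist T.r T.p))
             (AffineMap.lineMap p' q' (t / dist T.p T.q)))

/-- A geodesic metric space: every pair of points is joined by an arclength geodesic. -/
def GeodesicSpace (X : Type*) [MetricSpace X] : Prop :=
  ∀ x y : X, ∃ γ : ℝ → X, IsGeodesicSeg γ 0 (dist x y) ∧ γ 0 = x ∧ γ (dist x y) = y

/-- CAT(0): geodesic and all geodesic triangles are thin. -/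
def CAT0 (X : Type*) [MetricSpace X] : Prop :=
  GeodesicSpace X ∧ ∀ T : GeodesicTriangle X, Thin T

/-- Length (intrinsic) distance inside `J ⊆ ℝ²`: infimum of lengths of paths in `J`. -/
def lengthDistIn (J : Set E2) (x y : E2) : ℝ≥0∞ :=
  ⨅ (γ : Path x y) (_ : ∀ t, γ t ∈ J), eVariationOn (fun t => γ t) Set.univ

/-- A Jordan domain: a homeomorphic image of the closed unit disk. -/
def IsJordanDomain (J : Set E2) : Prop :=
  Nonempty ((Metric.closedBall (0:E2) 1 : Set E2) ≃ₜ J)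

end


noncomputable section ThinAuxSection
open AffineMap
open scoped RealInnerProductSpace



section InnerLemmas
variable {F : Type*} [NormedAddCommGroup F] [InnerProductSpace ℝ F]

lemma dist_sq_lineMap (z u w : F) (τ : ℝ) :
    dist z (lineMap u w τ) ^ 2
      = (1 - τ) * dist z u ^ 2 + τ * dist z w ^ 2 - τ * (1 - τ) * dist u w ^ 2 := by
  have h : z - ((1 - τ) • u + τ • w) = (1 - τ) • (z - u) + τ • (z - w) := by
    rw [smul_sub, smul_sub]; module
  have hin : ⟪z - u, z - w⟫ = (dist z u ^ 2 + dist z w ^ 2 - dist u w ^ 2) / 2 := by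
    have h2 : (z - u) - (z - w) = w - u := by abel
    have := norm_sub_sq_real (z - u) (z - w)
    rw [h2] at this
    rw [dist_eq_norm, dist_eq_norm, dist_eq_norm, norm_sub_rev u w]
    linarith
  rw [lineMap_apply_module, dist_eq_norm, dist_eq_norm, dist_eq_norm, h, norm_add_sq_real,
    real_inner_smul_left, real_inner_smul_right, hin, norm_smul, norm_smul, mul_pow, mul_pow]
  rw [Real.norm_eq_abs, Real.norm_eq_abs, sq_abs, sq_abs, dist_eq_norm, dist_eq_norm]
  ring

lemma dist_lineMap_le' (z u w : F) {τ : ℝ} (h0 : 0 ≤ τ) (h1 : τ ≤ 1) :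
    dist z (lineMap u w τ) ≤ (1 - τ) * dist z u + τ * dist z w := by
  have h : z - ((1 - τ) • u + τ • w) = (1 - τ) • (z - u) + τ • (z - w) := by
    rw [smul_sub, smul_sub]; module
  rw [lineMap_apply_module, dist_eq_norm, h]
  refine (norm_add_le _ _).trans ?_
  rw [norm_smul, norm_smul, Real.norm_eq_abs, Real.norm_eq_abs,
    abs_of_nonneg (by linarith), abs_of_nonneg h0, dist_eq_norm, dist_eq_norm]

/-- The key comparison lemma. -/
lemma key_comparison (Z Z' u u' w w' : F) (a τ : ℝ) (ha : 0 ≤ a) (h0 : 0 ≤ τ) (h1 : τ ≤ 1)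
    (hl : dist u' w' = dist u w)
    (e0 : a + dist Z' u' ≤ dist Z u) (e1 : a + dist Z' w' ≤ dist Z w) :
    a + dist Z' (lineMap u' w' τ) ≤ dist Z (lineMap u w τ) := by
  set D := dist Z' (lineMap u' w' τ) with hD
  set G := dist Z (lineMap u w τ) with hG
  have hD2 := dist_sq_lineMap Z' u' w' τ
  have hG2 := dist_sq_lineMap Z u w τ
  rw [hl] at hD2
  have hDle := dist_lineMap_le' Z' u' w' h0 h1
  have hDu : (0:ℝ) ≤ dist Z' u' := dist_nonneg
  have hDw : (0:ℝ) ≤ dist Z' w' := dist_nonneg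
  have t1 : (a + dist Z' u') ^ 2 ≤ dist Z u ^ 2 := by nlinarith
  have t2 : (a + dist Z' w') ^ 2 ≤ dist Z w ^ 2 := by nlinarith
  have k1 : 0 ≤ (1 - τ) * (dist Z u ^ 2 - (a + dist Z' u') ^ 2) :=
    mul_nonneg (by linarith) (by linarith)
  have k2 : 0 ≤ τ * (dist Z w ^ 2 - (a + dist Z' w') ^ 2) :=
    mul_nonneg h0 (by linarith)
  have k3 : 0 ≤ a * ((1 - τ) * dist Z' u' + τ * dist Z' w' - D) := mul_nonneg ha (by linarith)
  have hsq : (a + D) ^ 2 ≤ G ^ 2 := by nlinarith [hD2, hG2, k1, k2, k3]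
  have hposD : 0 ≤ a + D := by positivity
  calc a + D = Real.sqrt ((a + D) ^ 2) := (Real.sqrt_sq hposD).symm
    _ ≤ Real.sqrt (G ^ 2) := Real.sqrt_le_sqrt hsq
    _ = G := Real.sqrt_sq dist_nonneg


end InnerLemmas



def pt2 (x y : ℝ) : E2 := (WithLp.equiv 2 (Fin 2 → ℝ)).symm ![x, y]

lemma dist_pt2 (x y x' y' : ℝ) :
    dist (pt2 x y) (pt2 x' y') = Real.sqrt ((x - x') ^ 2 + (y - y') ^ 2) := by
  rw [EuclideanSpace.dist_eq]
  congr 1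
  rw [Fin.sum_univ_two]
  simp [pt2, Real.dist_eq, sq_abs]

lemma exists_comparison (L1 L2 L3 : ℝ) (h1 : 0 ≤ L1) (h3 : 0 ≤ L3)
    (t1 : L3 ≤ L1 + L2) (t2 : L1 ≤ L2 + L3) (t3 : L2 ≤ L3 + L1) :
    ∃ p q r : E2, dist p q = L1 ∧ dist q r = L2 ∧ dist r p = L3 := by
  have h2 : 0 ≤ L2 := by linarith
  rcases eq_or_lt_of_le h1 with h10 | h1pos
  · -- L1 = 0, so L2 = L3
    have hL23 : L2 = L3 := le_antisymm (by linarith) (by linarith)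
    refine ⟨pt2 0 0, pt2 0 0, pt2 L2 0, ?_, ?_, ?_⟩
    · rw [dist_pt2]; simp [← h10]
    · rw [dist_pt2]; rw [show (0:ℝ) - L2 = -L2 by ring]
      simp [Real.sqrt_sq_eq_abs, abs_of_nonneg h2]
    · rw [dist_pt2]
      simp [Real.sqrt_sq_eq_abs, abs_of_nonneg h2, hL23, h3]
  · set x : ℝ := (L1 ^ 2 + L3 ^ 2 - L2 ^ 2) / (2 * L1) with hx
    have hxval : x * (2 * L1) = L1 ^ 2 + L3 ^ 2 - L2 ^ 2 := by
      rw [hx]; field_simp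
    have hP : 0 ≤ ((L1 + L3) ^ 2 - L2 ^ 2) * (L2 ^ 2 - (L1 - L3) ^ 2) :=
      mul_nonneg (by nlinarith) (by nlinarith)
    have h4 : 4 * L1 ^ 2 * (L3 ^ 2 - x ^ 2)
        = ((L1 + L3) ^ 2 - L2 ^ 2) * (L2 ^ 2 - (L1 - L3) ^ 2) := by
      linear_combination (-(x * (2 * L1)) - (L1 ^ 2 + L3 ^ 2 - L2 ^ 2)) * hxval
    have hx2 : 0 ≤ L3 ^ 2 - x ^ 2 := by nlinarith [h4, hP, mul_pos h1pos h1pos]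
    set y : ℝ := Real.sqrt (L3 ^ 2 - x ^ 2) with hy
    have hy2 : y ^ 2 = L3 ^ 2 - x ^ 2 := Real.sq_sqrt hx2
    refine ⟨pt2 0 0, pt2 L1 0, pt2 x y, ?_, ?_, ?_⟩
    · rw [dist_pt2]
      rw [show (0 - L1) ^ 2 + (0 - 0) ^ 2 = L1 ^ 2 by ring]
      rw [Real.sqrt_sq_eq_abs, abs_of_nonneg h1]
    · rw [dist_pt2]
      rw [show (L1 - x) ^ 2 + (0 - y) ^ 2 = L1 ^ 2 - 2 * L1 * x + x ^ 2 + y ^ 2 by ring, hy2]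
      rw [show L1 ^ 2 - 2 * L1 * x + x ^ 2 + (L3 ^ 2 - x ^ 2) = L1 ^ 2 + L3 ^ 2 - 2 * L1 * x by ring]
      rw [show L1 ^ 2 + L3 ^ 2 - 2 * L1 * x = L2 ^ 2 by linear_combination -hxval]
      simp [Real.sqrt_sq_eq_abs, abs_of_nonneg h2]
    · rw [dist_pt2]
      rw [show (x - 0) ^ 2 + (y - 0) ^ 2 = x ^ 2 + y ^ 2 by ring, hy2]
      rw [show x ^ 2 + (L3 ^ 2 - x ^ 2) = L3 ^ 2 by ring]
      simp [Real.sqrt_sq_eq_abs, abs_of_nonneg h3]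

section Param
variable {F : Type*} [NormedAddCommGroup F] [NormedSpace ℝ F]

lemma dist_left_div (p q : F) (L s : ℝ) (hL : dist p q = L) (hs0 : 0 ≤ s) (hsL : s ≤ L) :
    dist p (lineMap p q (s / L)) = s := by
  rcases eq_or_lt_of_le (hs0.trans hsL) with h0 | hpos
  · have : s = 0 := le_antisymm (by rw [← h0] at hsL; exact hsL) hs0
    subst this
    simp [dist_comm, dist_lineMap_left, hL, ← h0]
  · rw [dist_comm, dist_lineMap_left, hL, Real.norm_eq_abs,
      abs_of_nonneg (div_nonneg hs0 hpos.le)]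
    field_simp
lemma dist_right_div (p q : F) (L s : ℝ) (hL : dist p q = L) (hs0 : 0 ≤ s) (hsL : s ≤ L) :
    dist (lineMap p q (s / L)) q = L - s := by
  rcases eq_or_lt_of_le (hs0.trans hsL) with h0 | hpos
  · have : s = 0 := le_antisymm (by rw [← h0] at hsL; exact hsL) hs0
    subst this
    simp [dist_lineMap_right, hL, ← h0]
  · rw [dist_lineMap_right, hL, Real.norm_eq_abs]
    rw [show (1 : ℝ) - s / L = (L - s) / L by field_simp]
    rw [abs_of_nonneg (div_nonneg (by linarith) hpos.le)]
    field_simp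

lemma dist_pair_div (p q : F) (L s t : ℝ) (hL : dist p q = L) (hs0 : 0 ≤ s) (hsL : s ≤ L)
    (ht0 : 0 ≤ t) (htL : t ≤ L) :
    dist (lineMap p q (s / L)) (lineMap p q (t / L)) = |s - t| := by
  rcases eq_or_lt_of_le (hs0.trans hsL) with h0 | hpos
  · have hs : s = 0 := le_antisymm (by rw [← h0] at hsL; exact hsL) hs0
    have ht : t = 0 := le_antisymm (by rw [← h0] at htL; exact htL) ht0
    subst hs; subst ht; simp
  · rw [dist_lineMap_lineMap, hL, Real.dist_eq,
      show s / L - t / L = (s - t) / L by field_simp, abs_div, abs_of_pos hpos]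
    field_simp

lemma lineMap_div_reparam (p q : F) (den A M s : ℝ) (hM : 0 ≤ M) (hs0 : 0 ≤ s) (hsM : s ≤ M) :
    lineMap p q ((A + s) / den)
      = lineMap (lineMap p q (A / den)) (lineMap p q ((A + M) / den)) (s / M) := by
  rw [← AffineMap.apply_lineMap (lineMap p q : ℝ →ᵃ[ℝ] F)]
  congr 1
  rcases eq_or_lt_of_le hM with h0 | hMpos
  · have : s = 0 := le_antisymm (by rw [← h0] at hsM; exact hsM) hs0
    subst this
    simp [lineMap_apply_ring', ← h0]
  · rcases eq_or_ne den 0 with hden | hden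
    · subst hden
      simp [lineMap_apply_ring']
    · rw [lineMap_apply_ring']
      field_simp
      ring
end Param

end ThinAuxSection
noncomputable section MainLemma
open AffineMap Set

set_option maxHeartbeats 2000000 in
lemma main_clause1 {X : Type*} [MetricSpace X]
    (T T' : GeodesicTriangle X) (a b c : ℝ)
    (ha : 0 ≤ a) (hb : 0 ≤ b) (hc : 0 ≤ c)
    (hlen₁ : dist T.p T.q = a + dist T'.p T'.q + b)
    (hlen₂ : dist T.q T.r = b + dist T'.q T'.r + c)
    (hlen₃ : dist T.r T.p = c + dist T'.r T'.p + a)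
    (hcore₁ : ∀ t ∈ Set.Icc (0:ℝ) (dist T'.p T'.q), T.side₁ (a + t) = T'.side₁ t)
    (hcore₂ : ∀ t ∈ Set.Icc (0:ℝ) (dist T'.q T'.r), T.side₂ (b + t) = T'.side₂ t)
    (hcore₃ : ∀ t ∈ Set.Icc (0:ℝ) (dist T'.r T'.p), T.side₃ (c + t) = T'.side₃ t)
    (htailq : ∀ t ∈ Set.Icc (0:ℝ) b, T.side₂ t = T.side₁ (dist T.p T.q - t))
    (htailr : ∀ t ∈ Set.Icc (0:ℝ) c, T.side₃ t = T.side₂ (dist T.q T.r - t))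
    (hthin : Thin T')
    (p' q' r' : E2)
    (h1 : dist p' q' = dist T.p T.q) (h2 : dist q' r' = dist T.q T.r)
    (h3 : dist r' p' = dist T.r T.p) :
    ∀ s ∈ Set.Icc (0:ℝ) (dist T.p T.q), ∀ t ∈ Set.Icc (0:ℝ) (dist T.q T.r),
      dist (T.side₁ s) (T.side₂ t) ≤
        dist (AffineMap.lineMap p' q' (s / dist T.p T.q))
             (AffineMap.lineMap q' r' (t / dist T.q T.r)) := by
  intro s hs t ht
  set L1 := dist T'.p T'.q with hL1def
  set L2 := dist T'.q T'.r with hL2def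
  set L3 := dist T'.r T'.p with hL3def
  set x1 := dist T.p T.q with hx1def
  set x2 := dist T.q T.r with hx2def
  set x3 := dist T.r T.p with hx3def
  have hL1 : 0 ≤ L1 := dist_nonneg
  have hL2 : 0 ≤ L2 := dist_nonneg
  have hL3 : 0 ≤ L3 := dist_nonneg
  have tA : L3 ≤ L1 + L2 := by
    have h := dist_triangle T'.r T'.q T'.p
    rw [dist_comm T'.r T'.q, dist_comm T'.q T'.p] at h
    rw [hL3def, hL1def, hL2def]; linarith [h]
  have tB : L1 ≤ L2 + L3 := by
    have h := dist_triangle T'.p T'.r T'.q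
    rw [dist_comm T'.p T'.r, dist_comm T'.r T'.q] at h
    rw [hL3def, hL1def, hL2def]; linarith [h]
  have tC : L2 ≤ L3 + L1 := by
    have h := dist_triangle T'.q T'.p T'.r
    rw [dist_comm T'.q T'.p, dist_comm T'.p T'.r] at h
    rw [hL3def, hL1def, hL2def]; linarith [h]
  obtain ⟨cp, cq, cr, e1, e2, e3⟩ := exists_comparison L1 L2 L3 hL1 hL3 tA tB tC
  obtain ⟨H1, -, -⟩ := hthin cp cq cr e1 e2 e3
  simp only [← hL1def, ← hL2def] at H1
  -- anchors
  have hc10 : T.side₁ a = T'.p := by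
    have h := hcore₁ 0 ⟨le_rfl, hL1⟩
    rw [add_zero] at h; rw [h]; exact T'.s₁0
  have hc11 : T.side₁ (a + L1) = T'.q := by
    have h := hcore₁ L1 ⟨hL1, le_rfl⟩
    rw [h, hL1def]; exact T'.s₁1
  have hc20 : T.side₂ b = T'.q := by
    have h := hcore₂ 0 ⟨le_rfl, hL2⟩
    rw [add_zero] at h; rw [h]; exact T'.s₂0
  have hc21 : T.side₂ (b + L2) = T'.r := by
    have h := hcore₂ L2 ⟨hL2, le_rfl⟩
    rw [h, hL2def]; exact T'.s₂1
  have hc30 : T.side₃ c = T'.r := by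
    have h := hcore₃ 0 ⟨le_rfl, hL3⟩
    rw [add_zero] at h; rw [h]; exact T'.s₃0
  have hs21' : T'.side₂ L2 = T'.r := by rw [hL2def]; exact T'.s₂1
  -- geodesic parametrization facts
  have g1 : ∀ u ∈ Set.Icc (0:ℝ) x1, ∀ v ∈ Set.Icc (0:ℝ) x1,
      dist (T.side₁ u) (T.side₁ v) = |u - v| := T.geo₁
  have g2 : ∀ u ∈ Set.Icc (0:ℝ) x2, ∀ v ∈ Set.Icc (0:ℝ) x2,
      dist (T.side₂ u) (T.side₂ v) = |u - v| := T.geo₂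
  have g3 : ∀ u ∈ Set.Icc (0:ℝ) x3, ∀ v ∈ Set.Icc (0:ℝ) x3,
      dist (T.side₃ u) (T.side₃ v) = |u - v| := T.geo₃
  -- comparison-side distance facts
  have dp'Xs : dist p' (lineMap p' q' (s / x1)) = s := dist_left_div _ _ _ _ h1 hs.1 hs.2
  have dXsq' : dist (lineMap p' q' (s / x1)) q' = x1 - s := dist_right_div _ _ _ _ h1 hs.1 hs.2
  have dq'Yt : dist q' (lineMap q' r' (t / x2)) = t := dist_left_div _ _ _ _ h2 ht.1 ht.2
  have dYtr' : dist (lineMap q' r' (t / x2)) r' = x2 - t := dist_right_div _ _ _ _ h2 ht.1 ht.2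
  have dp'A : dist p' (lineMap p' q' (a / x1)) = a :=
    dist_left_div _ _ _ _ h1 ha (by rw [hlen₁]; linarith)
  have dA2q' : dist (lineMap p' q' ((a + L1) / x1)) q' = b := by
    rw [dist_right_div _ _ _ _ h1 (by linarith) (by rw [hlen₁]; linarith), hlen₁]; ring
  have dAA2 : dist (lineMap p' q' (a / x1)) (lineMap p' q' ((a + L1) / x1)) = L1 := by
    rw [dist_pair_div _ _ _ _ _ h1 ha (by rw [hlen₁]; linarith) (by linarith)
      (by rw [hlen₁]; linarith), abs_sub_comm, abs_of_nonneg (by linarith)]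
    ring
  have dq'B : dist q' (lineMap q' r' (b / x2)) = b :=
    dist_left_div _ _ _ _ h2 hb (by rw [hlen₂]; linarith)
  have dB2r' : dist (lineMap q' r' ((b + L2) / x2)) r' = c := by
    rw [dist_right_div _ _ _ _ h2 (by linarith) (by rw [hlen₂]; linarith), hlen₂]; ring
  have dBB2 : dist (lineMap q' r' (b / x2)) (lineMap q' r' ((b + L2) / x2)) = L2 := by
    rw [dist_pair_div _ _ _ _ _ h2 hb (by rw [hlen₂]; linarith) (by linarith)
      (by rw [hlen₂]; linarith), abs_sub_comm, abs_of_nonneg (by linarith)]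
    ring
  -- core comparison endpoint values
  have ccx0 : lineMap cp cq ((0:ℝ) / L1) = cp := by rw [zero_div, lineMap_apply_zero]
  have cyL2 : lineMap cq cr (L2 / L2) = cr := by
    rcases eq_or_lt_of_le hL2 with h0 | hpos
    · have hcqr : cq = cr := by apply eq_of_dist_eq_zero; rw [e2, ← h0]
      rw [← hcqr, ← h0, zero_div, lineMap_apply_zero]
    · rw [div_self hpos.ne', lineMap_apply_one]
  -- sublemma (C') : spur c beyond the second side of the core
  have lemCp : ∀ s' ∈ Set.Icc (0:ℝ) L1,
      c + dist cr (lineMap cp cq (s' / L1)) ≤ dist r' (lineMap p' q' ((a + s') / x1)) := by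
    intro s' hs'
    rw [lineMap_div_reparam p' q' x1 a L1 s' hL1 hs'.1 hs'.2]
    apply key_comparison _ _ _ _ _ _ c (s' / L1) hc (div_nonneg hs'.1 hL1)
      (div_le_one_of_le₀ hs'.2 hL1)
    · rw [e1, dAA2]
    · have htr := dist_triangle r' (lineMap p' q' (a / x1)) p'
      rw [dist_comm (lineMap p' q' (a / x1)) p', h3, hlen₃] at htr
      rw [e3]
      linarith [htr, dp'A]
    · have htr := dist_triangle r' (lineMap p' q' ((a + L1) / x1)) q'
      rw [dist_comm r' q', h2, hlen₂] at htr
      rw [dist_comm cr cq, e2]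
      linarith [htr, dA2q']
  -- sublemma (C) : spur a beyond the first side of the core
  have lemCa : ∀ v ∈ Set.Icc (0:ℝ) L2,
      a + dist cp (lineMap cq cr (v / L2)) ≤ dist p' (lineMap q' r' ((b + v) / x2)) := by
    intro v hv
    rw [lineMap_div_reparam q' r' x2 b L2 v hL2 hv.1 hv.2]
    apply key_comparison _ _ _ _ _ _ a (v / L2) ha (div_nonneg hv.1 hL2)
      (div_le_one_of_le₀ hv.2 hL2)
    · rw [e2, dBB2]
    · have htr := dist_triangle p' (lineMap q' r' (b / x2)) q'
      rw [dist_comm (lineMap q' r' (b / x2)) q', h1, hlen₁] at htr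
      rw [e1]
      linarith [htr, dq'B]
    · have htr := dist_triangle p' (lineMap q' r' ((b + L2) / x2)) r'
      rw [dist_comm p' r', h3, hlen₃] at htr
      rw [dist_comm cp cr, e3]
      linarith [htr, dB2r']
  -- sublemma (I) : core side against core side
  have lemI : ∀ s' ∈ Set.Icc (0:ℝ) L1, ∀ v ∈ Set.Icc (0:ℝ) L2,
      dist (lineMap cp cq (s' / L1)) (lineMap cq cr (v / L2)) ≤
        dist (lineMap p' q' ((a + s') / x1)) (lineMap q' r' ((b + v) / x2)) := by
    intro s' hs' v hv
    have hZq' : dist (lineMap p' q' ((a + s') / x1)) q' = x1 - (a + s') :=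
      dist_right_div _ _ _ _ h1 (by linarith [hs'.1]) (by linarith [hs'.2, hlen₁])
    have hsl : dist cq cr = dist (lineMap q' r' (b / x2)) (lineMap q' r' ((b + L2) / x2)) := by
      rw [e2, dBB2]
    have he0 : (0:ℝ) + dist (lineMap cp cq (s' / L1)) cq ≤
        dist (lineMap p' q' ((a + s') / x1)) (lineMap q' r' (b / x2)) := by
      have hcx : dist (lineMap cp cq (s' / L1)) cq = L1 - s' :=
        dist_right_div _ _ _ _ e1 hs'.1 hs'.2
      have htr := dist_triangle (lineMap p' q' ((a + s') / x1)) (lineMap q' r' (b / x2)) q'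
      rw [dist_comm (lineMap q' r' (b / x2)) q', hZq'] at htr
      rw [zero_add, hcx]
      linarith [htr, dq'B, hlen₁]
    have he1 : (0:ℝ) + dist (lineMap cp cq (s' / L1)) cr ≤
        dist (lineMap p' q' ((a + s') / x1)) (lineMap q' r' ((b + L2) / x2)) := by
      have hcc := lemCp s' hs'
      have htr := dist_triangle (lineMap p' q' ((a + s') / x1)) (lineMap q' r' ((b + L2) / x2)) r'
      rw [zero_add, dist_comm (lineMap cp cq (s' / L1)) cr]
      rw [dist_comm r' (lineMap p' q' ((a + s') / x1))] at hcc
      linarith [htr, hcc, dB2r']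
    have hk := key_comparison (lineMap p' q' ((a + s') / x1)) (lineMap cp cq (s' / L1))
      (lineMap q' r' (b / x2)) cq (lineMap q' r' ((b + L2) / x2)) cr 0 (v / L2)
      le_rfl (div_nonneg hv.1 hL2) (div_le_one_of_le₀ hv.2 hL2) hsl he0 he1
    rw [zero_add] at hk
    rw [lineMap_div_reparam q' r' x2 b L2 v hL2 hv.1 hv.2]
    exact hk
  -- trivial lower bound via the corner q'
  have habs : |(x1 - s) - t| ≤
      dist (lineMap p' q' (s / x1)) (lineMap q' r' (t / x2)) := by
    have h := abs_dist_sub_le (lineMap p' q' (s / x1)) (lineMap q' r' (t / x2)) q'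
    rw [dXsq', dist_comm (lineMap q' r' (t / x2)) q', dq'Yt] at h
    exact h
  ----------------------------------------------------------------
  rcases le_or_gt t b with htb | htb
  · -- (T1) t in the tail at q shared with side₁
    have h2t : T.side₂ t = T.side₁ (x1 - t) := htailq t ⟨ht.1, htb⟩
    rw [h2t, g1 s hs (x1 - t) ⟨by linarith [ht.2], by linarith [ht.1]⟩]
    calc |s - (x1 - t)| = |(x1 - s) - t| := by rw [abs_sub_comm]; congr 1; ring
      _ ≤ _ := habs
  rcases le_or_gt s (a + L1) with hs2 | hs2
  rcases le_or_gt a s with hsa | hsa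
  · -- a ≤ s ≤ a + L1 : s on the core part of side₁
    have hside1 : T.side₁ s = T'.side₁ (s - a) := by
      have h := hcore₁ (s - a) ⟨by linarith, by linarith⟩
      rwa [show a + (s - a) = s by ring] at h
    rcases le_or_gt t (b + L2) with htc | htc
    · -- core against core
      have hv : t - b ∈ Set.Icc (0:ℝ) L2 := ⟨by linarith, by linarith⟩
      have hside2 : T.side₂ t = T'.side₂ (t - b) := by
        have h := hcore₂ (t - b) hv
        rwa [show b + (t - b) = t by ring] at h
      have hH := H1 (s - a) ⟨by linarith, by linarith⟩ (t - b) hv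
      have hI := lemI (s - a) ⟨by linarith, by linarith⟩ (t - b) hv
      rw [show a + (s - a) = s by ring, show b + (t - b) = t by ring] at hI
      rw [hside1, hside2]
      exact hH.trans hI
    · -- t in the tail at r
      have hw : x2 - t ∈ Set.Icc (0:ℝ) c := ⟨by linarith [ht.2], by linarith [htc, hlen₂]⟩
      have hside2 : T.side₂ t = T.side₃ (x2 - t) := by
        have h := htailr (x2 - t) hw
        rw [show x2 - (x2 - t) = t by ring] at h
        exact h.symm
      have hdag : c + dist (T.side₁ s) T'.r ≤ dist (lineMap p' q' (s / x1)) r' := by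
        rw [hside1]
        have hH := H1 (s - a) ⟨by linarith, by linarith⟩ L2 ⟨hL2, le_rfl⟩
        rw [hs21', cyL2] at hH
        have hcc := lemCp (s - a) ⟨by linarith, by linarith⟩
        rw [show a + (s - a) = s by ring] at hcc
        rw [dist_comm (lineMap p' q' (s / x1)) r']
        rw [dist_comm cr (lineMap cp cq ((s - a) / L1))] at hcc
        linarith [hH, hcc]
      have hd3 : dist T'.r (T.side₂ t) = c - (x2 - t) := by
        rw [hside2, ← hc30,
          g3 c ⟨hc, by linarith [hlen₃]⟩ (x2 - t) ⟨hw.1, by linarith [hw.2, hlen₃]⟩,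
          abs_of_nonneg (by linarith [hw.2])]
      have htr1 := dist_triangle (T.side₁ s) T'.r (T.side₂ t)
      have htr2 := dist_triangle (lineMap p' q' (s / x1)) (lineMap q' r' (t / x2)) r'
      linarith [htr1, htr2, hdag, hd3, dYtr']
  · -- s in the tail at p
    have hd1 : dist (T.side₁ s) (T.side₁ a) = a - s := by
      rw [g1 s hs a ⟨ha, by linarith [hlen₁]⟩, abs_sub_comm,
        abs_of_nonneg (by linarith)]
    rcases le_or_gt t (b + L2) with htc | htc
    · -- t on the core part of side₂
      have hv : t - b ∈ Set.Icc (0:ℝ) L2 := ⟨by linarith, by linarith⟩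
      have hside2 : T.side₂ t = T'.side₂ (t - b) := by
        have h := hcore₂ (t - b) hv
        rwa [show b + (t - b) = t by ring] at h
      have hH := H1 0 ⟨le_rfl, hL1⟩ (t - b) hv
      rw [T'.s₁0, ccx0] at hH
      have hCa := lemCa (t - b) hv
      rw [show b + (t - b) = t by ring] at hCa
      have htr0 := dist_triangle (T.side₁ s) (T.side₁ a) (T.side₂ t)
      rw [hd1, hc10, hside2] at htr0
      have htr3 := dist_triangle p' (lineMap p' q' (s / x1)) (lineMap q' r' (t / x2))
      rw [hside2]
      linarith [htr0, hH, hCa, htr3, dp'Xs]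
    · -- t in the tail at r
      have hw : x2 - t ∈ Set.Icc (0:ℝ) c := ⟨by linarith [ht.2], by linarith [htc, hlen₂]⟩
      have hside2 : T.side₂ t = T.side₃ (x2 - t) := by
        have h := htailr (x2 - t) hw
        rw [show x2 - (x2 - t) = t by ring] at h
        exact h.symm
      have hdag : c + dist (T.side₁ s) T'.r ≤ dist (lineMap p' q' (s / x1)) r' := by
        have htr0 := dist_triangle (T.side₁ s) (T.side₁ a) T'.r
        rw [hd1, hc10] at htr0
        have hpr : dist T'.p T'.r = L3 := by rw [dist_comm]
        have htr3 := dist_triangle p' (lineMap p' q' (s / x1)) r'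
        rw [dist_comm p' r', h3] at htr3
        linarith [htr0, hpr, htr3, dp'Xs, hlen₃]
      have hd3 : dist T'.r (T.side₂ t) = c - (x2 - t) := by
        rw [hside2, ← hc30,
          g3 c ⟨hc, by linarith [hlen₃]⟩ (x2 - t) ⟨hw.1, by linarith [hw.2, hlen₃]⟩,
          abs_of_nonneg (by linarith [hw.2])]
      have htr1 := dist_triangle (T.side₁ s) T'.r (T.side₂ t)
      have htr2 := dist_triangle (lineMap p' q' (s / x1)) (lineMap q' r' (t / x2)) r'
      linarith [htr1, htr2, hdag, hd3, dYtr']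
  · -- s in the tail at q (s > a + L1)
    have hw : x1 - s ∈ Set.Icc (0:ℝ) b := ⟨by linarith [hs.2], by linarith [hs2, hlen₁]⟩
    have hside1 : T.side₁ s = T.side₂ (x1 - s) := by
      have h := htailq (x1 - s) hw
      rw [show x1 - (x1 - s) = s by ring] at h
      exact h.symm
    rw [hside1, g2 (x1 - s) ⟨hw.1, by linarith [hw.2, hlen₂]⟩ t ht]
    exact habs

end MainLemma
noncomputable section RotSection

/-- Cyclic rotation of a geodesic triangle. -/
def rotT {X : Type*} [MetricSpace X] (T : GeodesicTriangle X) : GeodesicTriangle X where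
  p := T.q
  q := T.r
  r := T.p
  side₁ := T.side₂
  side₂ := T.side₃
  side₃ := T.side₁
  geo₁ := T.geo₂
  geo₂ := T.geo₃
  geo₃ := T.geo₁
  s₁0 := T.s₂0
  s₁1 := T.s₂1
  s₂0 := T.s₃0
  s₂1 := T.s₃1
  s₃0 := T.s₁0
  s₃1 := T.s₁1

lemma thin_rot {X : Type*} [MetricSpace X] {T : GeodesicTriangle X} (h : Thin T) :
    Thin (rotT T) := by
  intro p' q' r' h1 h2 h3
  obtain ⟨c1, c2, c3⟩ := h r' p' q' h3 h1 h2
  exact ⟨c2, c3, c1⟩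

end RotSection

noncomputable section

/-- If a geodesic triangle `T` consists of a core geodesic triangle `T'` (with vertices
the bifurcation points `p̄ = T'.p`, `q̄ = T'.q`, `r̄ = T'.r`) together with three
geodesic tails at the vertices, and the core triangle is thin, then `T` is thin. -/
theorem thin_of_core_thin {X : Type*} [MetricSpace X]
    (T T' : GeodesicTriangle X) (a b c : ℝ)
    (ha : 0 ≤ a) (hb : 0 ≤ b) (hc : 0 ≤ c)
    (hap : dist T.p T'.p = a) (hbq : dist T.q T'.q = b) (hcr : dist T.r T'.r = c)
    (hlen₁ : dist T.p T.q = a + dist T'.p T'.q + b)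
    (hlen₂ : dist T.q T.r = b + dist T'.q T'.r + c)
    (hlen₃ : dist T.r T.p = c + dist T'.r T'.p + a)
    (hcore₁ : ∀ t ∈ Set.Icc (0:ℝ) (dist T'.p T'.q), T.side₁ (a + t) = T'.side₁ t)
    (hcore₂ : ∀ t ∈ Set.Icc (0:ℝ) (dist T'.q T'.r), T.side₂ (b + t) = T'.side₂ t)
    (hcore₃ : ∀ t ∈ Set.Icc (0:ℝ) (dist T'.r T'.p), T.side₃ (c + t) = T'.side₃ t)
    (htailp : ∀ t ∈ Set.Icc (0:ℝ) a, T.side₁ t = T.side₃ (dist T.r T.p - t))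
    (htailq : ∀ t ∈ Set.Icc (0:ℝ) b, T.side₂ t = T.side₁ (dist T.p T.q - t))
    (htailr : ∀ t ∈ Set.Icc (0:ℝ) c, T.side₃ t = T.side₂ (dist T.q T.r - t))
    (hthin : Thin T') :
    Thin T := by
  intro p' q' r' h1 h2 h3
  refine ⟨?_, ?_, ?_⟩
  · exact main_clause1 T T' a b c ha hb hc hlen₁ hlen₂ hlen₃ hcore₁ hcore₂ hcore₃
      htailq htailr hthin p' q' r' h1 h2 h3
  · exact main_clause1 (rotT T) (rotT T') b c a hb hc ha hlen₂ hlen₃ hlen₁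
      hcore₂ hcore₃ hcore₁ htailr htailp (thin_rot hthin) q' r' p' h2 h3 h1
  · exact main_clause1 (rotT (rotT T)) (rotT (rotT T')) c a b hc ha hb hlen₃ hlen₁ hlen₂
      hcore₃ hcore₁ hcore₂ htailp htailq (thin_rot (thin_rot hthin)) r' p' q' h3 h1 h2

end
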